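/- Let a, b ≥ 1 be integers, N = 2^a·3^b, n ≥ 1, and i_1, …, i_n ∈ {0, …, N−1}. Set C = Σ_{j=1}^{n} i_j N^{j−1}. Then the forward atom is a single coset rectangle: ⋂_{j=1}^{n} {rep(N^j·y) : y ∈ A_{i_j}} = [0,1) × (2^{an}ℤ₂ − C) × (3^{bn}ℤ₃ − C), where 2^{an}ℤ₂ − C = {2^{an}z − C : z ∈ ℤ₂} and similarly for ℤ₃. -/

import Mathlib

open Set

noncomputable section

/-- The ambient group `G = ℝ × ℚ₂ × ℚ₃`. -/
abbrev G : Type := ℝ × ℚ_[2] × ℚ_[3]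

/-- The diagonal embedding of `ℚ` into `G`. -/
def Δ (r : ℚ) : G := ((r : ℝ), (r : ℚ_[2]), (r : ℚ_[3]))

/-- `ℤ[1/6]`, the rationals expressible with denominator `6^k`. -/
def zInv6 : Set ℚ := {q | ∃ (z : ℤ) (k : ℕ), q = z / 6 ^ k}

/-- `Γ = Δ(ℤ[1/6])`. -/
def Γ : Set G := Δ '' zInv6

/-- The fundamental domain `F = [0,1) × ℤ₂ × ℤ₃`. -/
def F : Set G := {x | x.1 ∈ Set.Ico (0 : ℝ) 1 ∧ ‖x.2.1‖ ≤ 1 ∧ ‖x.2.2‖ ≤ 1}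

/-- Coordinatewise multiplication by a rational on `G`. -/
def act (q : ℚ) (x : G) : G :=
  ((q : ℝ) * x.1, (q : ℚ_[2]) * x.2.1, (q : ℚ_[3]) * x.2.2)

/-- The atom `A_k = [k/N, (k+1)/N) × ℤ₂ × ℤ₃` of the partition `ξ`. -/
def A (N k : ℕ) : Set G :=
  {x | x.1 ∈ Set.Ico ((k : ℝ) / N) (((k : ℝ) + 1) / N) ∧ ‖x.2.1‖ ≤ 1 ∧ ‖x.2.2‖ ≤ 1}

lemma zInv6_intCast (m : ℤ) : (m : ℚ) ∈ zInv6 := ⟨m, 0, by norm_num⟩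

lemma zInv6_sub {q r : ℚ} (hq : q ∈ zInv6) (hr : r ∈ zInv6) : q - r ∈ zInv6 := by
  obtain ⟨z, k, rfl⟩ := hq; obtain ⟨w, l, rfl⟩ := hr
  refine ⟨z * 6 ^ l - w * 6 ^ k, k + l, ?_⟩
  have h1 : ((6:ℚ)) ^ k ≠ 0 := by positivity
  have h2 : ((6:ℚ)) ^ l ≠ 0 := by positivity
  field_simp
  push_cast; ring

lemma norm_nat_le_one (p : ℕ) [Fact p.Prime] (m : ℕ) : ‖((m : ℕ) : ℚ_[p])‖ ≤ 1 := by
  have := Padic.norm_int_le_one (p := p) m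
  simpa using this

lemma padic_sub_max (p : ℕ) [Fact p.Prime] (x y : ℚ_[p]) : ‖x - y‖ ≤ max ‖x‖ ‖y‖ := by
  have := Padic.nonarchimedean x (-y)
  simpa [sub_eq_add_neg] using this

lemma norm3_2 : ‖(3 : ℚ_[2])‖ = 1 := by
  have h1 : ‖((3:ℤ) : ℚ_[2])‖ ≤ 1 := Padic.norm_int_le_one _
  have h2 : ¬ ‖((3:ℤ) : ℚ_[2])‖ < 1 := by
    rw [Padic.norm_intCast_lt_one_iff]; decide
  have h3 : ((3:ℤ) : ℚ_[2]) = (3 : ℚ_[2]) := by norm_cast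
  rw [h3] at h1 h2
  exact le_antisymm h1 (not_lt.mp h2)

lemma norm2_3 : ‖(2 : ℚ_[3])‖ = 1 := by
  have h1 : ‖((2:ℤ) : ℚ_[3])‖ ≤ 1 := Padic.norm_int_le_one _
  have h2 : ¬ ‖((2:ℤ) : ℚ_[3])‖ < 1 := by
    rw [Padic.norm_intCast_lt_one_iff]; decide
  have h3 : ((2:ℤ) : ℚ_[3]) = (2 : ℚ_[3]) := by norm_cast
  rw [h3] at h1 h2
  exact le_antisymm h1 (not_lt.mp h2)

lemma norm_two2 : ‖(2 : ℚ_[2])‖ = 2⁻¹ := by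
  have := Padic.norm_p (p := 2)
  simpa using this

lemma norm_three3 : ‖(3 : ℚ_[3])‖ = 3⁻¹ := by
  have := Padic.norm_p (p := 3)
  simpa using this

lemma cop23 (x y : ℕ) : IsCoprime ((2:ℤ) ^ x) ((3:ℤ) ^ y) := by
  apply IsCoprime.pow
  rw [Int.isCoprime_iff_gcd_eq_one]
  decide

lemma int_of_norms {q : ℚ} (hq : q ∈ zInv6) (h2 : ‖(q : ℚ_[2])‖ ≤ 1)
    (h3 : ‖(q : ℚ_[3])‖ ≤ 1) : ∃ m : ℤ, q = m := by
  obtain ⟨z, k, rfl⟩ := hq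
  have h6 : ((6:ℚ)) ^ k ≠ 0 := by positivity
  have key2 : (2:ℤ) ^ k ∣ z := by
    suffices hs : ‖(z : ℚ_[2])‖ ≤ ((2:ℕ):ℝ) ^ (-(k:ℤ)) by
      have := (Padic.norm_int_le_pow_iff_dvd (p := 2) z k).mp hs
      exact_mod_cast this
    have he : ((z : ℚ_[2])) = (((z / 6 ^ k : ℚ) : ℚ_[2])) * (6:ℚ_[2]) ^ k := by
      have : ((z / 6 ^ k : ℚ)) * 6 ^ k = (z : ℚ) := by field_simp
      calc ((z : ℚ_[2])) = (((z / 6 ^ k * 6 ^ k : ℚ)) : ℚ_[2]) := by rw [this]; norm_cast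
        _ = (((z / 6 ^ k : ℚ) : ℚ_[2])) * (6:ℚ_[2]) ^ k := by push_cast; ring
    rw [he, norm_mul]
    have h6n : ‖(6 : ℚ_[2]) ^ k‖ = ((2:ℕ) : ℝ) ^ (-(k:ℤ)) := by
      have : (6 : ℚ_[2]) = 2 * 3 := by norm_num
      rw [norm_pow, this, norm_mul, norm_two2, norm3_2, mul_one]
      rw [zpow_neg, ← zpow_natCast, ← inv_zpow]
      norm_num
    rw [h6n]
    calc ‖((z / 6 ^ k : ℚ) : ℚ_[2])‖ * ((2:ℕ):ℝ) ^ (-(k:ℤ))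
        ≤ 1 * ((2:ℕ):ℝ) ^ (-(k:ℤ)) := by
          apply mul_le_mul_of_nonneg_right h2 (by positivity)
      _ = ((2:ℕ):ℝ) ^ (-(k:ℤ)) := one_mul _
  have key3 : (3:ℤ) ^ k ∣ z := by
    suffices hs : ‖(z : ℚ_[3])‖ ≤ ((3:ℕ):ℝ) ^ (-(k:ℤ)) by
      have := (Padic.norm_int_le_pow_iff_dvd (p := 3) z k).mp hs
      exact_mod_cast this
    have he : ((z : ℚ_[3])) = (((z / 6 ^ k : ℚ) : ℚ_[3])) * (6:ℚ_[3]) ^ k := by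
      have : ((z / 6 ^ k : ℚ)) * 6 ^ k = (z : ℚ) := by field_simp
      calc ((z : ℚ_[3])) = (((z / 6 ^ k * 6 ^ k : ℚ)) : ℚ_[3]) := by rw [this]; norm_cast
        _ = (((z / 6 ^ k : ℚ) : ℚ_[3])) * (6:ℚ_[3]) ^ k := by push_cast; ring
    rw [he, norm_mul]
    have h6n : ‖(6 : ℚ_[3]) ^ k‖ = ((3:ℕ) : ℝ) ^ (-(k:ℤ)) := by
      have : (6 : ℚ_[3]) = 2 * 3 := by norm_num
      rw [norm_pow, this, norm_mul, norm_three3, norm2_3, one_mul]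
      rw [zpow_neg, ← zpow_natCast, ← inv_zpow]
      norm_num
    rw [h6n]
    calc ‖((z / 6 ^ k : ℚ) : ℚ_[3])‖ * ((3:ℕ):ℝ) ^ (-(k:ℤ))
        ≤ 1 * ((3:ℕ):ℝ) ^ (-(k:ℤ)) := by
          apply mul_le_mul_of_nonneg_right h3 (by positivity)
      _ = ((3:ℕ):ℝ) ^ (-(k:ℤ)) := one_mul _
  have key : (6:ℤ) ^ k ∣ z := by
    have : (6:ℤ) ^ k = 2 ^ k * 3 ^ k := by rw [← mul_pow]; norm_num
    rw [this]
    exact (cop23 k k).mul_dvd key2 key3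
  obtain ⟨m, rfl⟩ := key
  refine ⟨m, ?_⟩
  push_cast
  field_simp

lemma gamma_sub {x y : ℝ × ℚ_[2] × ℚ_[3]} (hx : x ∈ Γ) (hy : y ∈ Γ) : x - y ∈ Γ := by
  obtain ⟨q, hq, rfl⟩ := hx; obtain ⟨r, hr, rfl⟩ := hy
  exact ⟨q - r, zInv6_sub hq hr, by simp [Δ, Prod.ext_iff]⟩

lemma rep_eq (rep : (ℝ × ℚ_[2] × ℚ_[3]) → (ℝ × ℚ_[2] × ℚ_[3]))
    (hrep : ∀ x, rep x ∈ F ∧ x - rep x ∈ Γ) (x u : ℝ × ℚ_[2] × ℚ_[3])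
    (hu : u ∈ F) (hx : x - u ∈ Γ) : rep x = u := by
  obtain ⟨h1, h2⟩ := hrep x
  have hdiff : u - rep x ∈ Γ := by
    have : u - rep x = (x - rep x) - (x - u) := by abel
    rw [this]; exact gamma_sub h2 hx
  obtain ⟨r, hr, hΔ⟩ := hdiff
  have e1 : (r : ℝ) = u.1 - (rep x).1 := congrArg Prod.fst hΔ
  have e2 : (r : ℚ_[2]) = u.2.1 - (rep x).2.1 := congrArg (fun t => t.2.1) hΔ
  have e3 : (r : ℚ_[3]) = u.2.2 - (rep x).2.2 := congrArg (fun t => t.2.2) hΔ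
  obtain ⟨m, rfl⟩ : ∃ m : ℤ, r = m := by
    apply int_of_norms hr
    · rw [e2]; exact le_trans (padic_sub_max 2 _ _) (max_le hu.2.1 h1.2.1)
    · rw [e3]; exact le_trans (padic_sub_max 3 _ _) (max_le hu.2.2 h1.2.2)
  have hm : m = 0 := by
    have hb1 := hu.1; have hb2 := h1.1
    simp only [Set.mem_Ico] at hb1 hb2
    have : ((m:ℚ):ℝ) = u.1 - (rep x).1 := e1
    push_cast at this
    have : -1 < (m:ℝ) ∧ (m:ℝ) < 1 := by constructor <;> linarith [this]
    have h' : -1 < m ∧ m < 1 := by exact_mod_cast this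
    omega
  subst hm
  have : u - rep x = 0 := by rw [← hΔ]; simp [Δ, Prod.ext_iff]
  have := sub_eq_zero.mp this
  exact this.symm

lemma image_char (rep : (ℝ × ℚ_[2] × ℚ_[3]) → (ℝ × ℚ_[2] × ℚ_[3]))
    (hrep : ∀ x, rep x ∈ F ∧ x - rep x ∈ Γ)
    (a b : ℕ) (N : ℕ) (hN : N = 2 ^ a * 3 ^ b) (j k : ℕ) (u : ℝ × ℚ_[2] × ℚ_[3]) :
    u ∈ (fun y => rep (act ((N : ℚ) ^ (j + 1)) y)) '' A N k ↔
      (u ∈ F ∧ ∃ q : ℤ, (k : ℤ) * (N : ℤ) ^ j ≤ q ∧ q < ((k : ℤ) + 1) * (N : ℤ) ^ j ∧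
        (∃ z : ℚ_[2], ‖z‖ ≤ 1 ∧ u.2.1 = 2 ^ (a * (j + 1)) * z - (q : ℚ_[2])) ∧
        (∃ w : ℚ_[3], ‖w‖ ≤ 1 ∧ u.2.2 = 3 ^ (b * (j + 1)) * w - (q : ℚ_[3]))) := by
  have hNpos : 0 < N := by rw [hN]; positivity
  have hNR : (0 : ℝ) < (N : ℝ) := by exact_mod_cast hNpos
  have hNRp : (0 : ℝ) < (N : ℝ) ^ (j + 1) := by positivity
  have hNc2 : ((N : ℚ_[2])) ^ (j + 1) = 2 ^ (a * (j + 1)) * 3 ^ (b * (j + 1)) := by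
    rw [hN]; push_cast; rw [mul_pow, ← pow_mul, ← pow_mul]
  have hNc3 : ((N : ℚ_[3])) ^ (j + 1) = 2 ^ (a * (j + 1)) * 3 ^ (b * (j + 1)) := by
    rw [hN]; push_cast; rw [mul_pow, ← pow_mul, ← pow_mul]
  have hact : ∀ y : ℝ × ℚ_[2] × ℚ_[3], act ((N : ℚ) ^ (j + 1)) y =
      (((N : ℝ)) ^ (j + 1) * y.1, ((N : ℚ_[2])) ^ (j + 1) * y.2.1,
        ((N : ℚ_[3])) ^ (j + 1) * y.2.2) := by
    intro y
    simp only [act, Prod.mk.injEq]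
    refine ⟨?_, ?_, ?_⟩ <;> push_cast <;> ring
  constructor
  · rintro ⟨y, hy, rfl⟩
    obtain ⟨hyA1, hyA2, hyA3⟩ := hy
    obtain ⟨hF, hΓ⟩ := hrep (act ((N : ℚ) ^ (j + 1)) y)
    obtain ⟨r, hr, hΔ⟩ := hΓ
    have e1 : (r : ℝ) = (act ((N : ℚ) ^ (j + 1)) y).1 - (rep (act ((N : ℚ) ^ (j + 1)) y)).1 :=
      congrArg Prod.fst hΔ
    have e2 : (r : ℚ_[2]) = (act ((N : ℚ) ^ (j + 1)) y).2.1 -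
        (rep (act ((N : ℚ) ^ (j + 1)) y)).2.1 := congrArg (fun t => t.2.1) hΔ
    have e3 : (r : ℚ_[3]) = (act ((N : ℚ) ^ (j + 1)) y).2.2 -
        (rep (act ((N : ℚ) ^ (j + 1)) y)).2.2 := congrArg (fun t => t.2.2) hΔ
    dsimp only
    rw [hact y] at e1 e2 e3 hF ⊢
    refine ⟨hF, ?_⟩
    have hxn2 : ‖((N : ℚ_[2])) ^ (j + 1) * y.2.1‖ ≤ 1 := by
      rw [norm_mul, norm_pow]
      calc ‖(N : ℚ_[2])‖ ^ (j + 1) * ‖y.2.1‖ ≤ 1 ^ (j + 1) * 1 := by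
            apply mul_le_mul _ hyA2 (norm_nonneg _) (by norm_num)
            exact pow_le_pow_left₀ (norm_nonneg _) (norm_nat_le_one 2 N) _
        _ = 1 := by norm_num
    have hxn3 : ‖((N : ℚ_[3])) ^ (j + 1) * y.2.2‖ ≤ 1 := by
      rw [norm_mul, norm_pow]
      calc ‖(N : ℚ_[3])‖ ^ (j + 1) * ‖y.2.2‖ ≤ 1 ^ (j + 1) * 1 := by
            apply mul_le_mul _ hyA3 (norm_nonneg _) (by norm_num)
            exact pow_le_pow_left₀ (norm_nonneg _) (norm_nat_le_one 3 N) _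
        _ = 1 := by norm_num
    obtain ⟨m, rfl⟩ : ∃ m : ℤ, r = m := by
      apply int_of_norms hr
      · rw [e2]; exact le_trans (padic_sub_max 2 _ _) (max_le hxn2 hF.2.1)
      · rw [e3]; exact le_trans (padic_sub_max 3 _ _) (max_le hxn3 hF.2.2)
    refine ⟨m, ?_, ?_, ⟨3 ^ (b * (j + 1)) * y.2.1, ?_, ?_⟩,
      ⟨2 ^ (a * (j + 1)) * y.2.2, ?_, ?_⟩⟩
    · -- lower bound
      have hkey : ((k : ℝ)) * (N : ℝ) ^ j ≤ (N : ℝ) ^ (j + 1) * y.1 := by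
        have hh : (N : ℝ) ^ (j + 1) * ((k : ℝ) / N) = (k : ℝ) * (N : ℝ) ^ j := by
          field_simp; ring
        calc ((k : ℝ)) * (N : ℝ) ^ j = (N : ℝ) ^ (j + 1) * ((k : ℝ) / N) := hh.symm
          _ ≤ (N : ℝ) ^ (j + 1) * y.1 :=
            mul_le_mul_of_nonneg_left hyA1.1 (le_of_lt hNRp)
      have hu1 := hF.1.2
      have : ((k : ℝ)) * (N : ℝ) ^ j < (m : ℝ) + 1 := by
        push_cast at e1 ⊢
        nlinarith [e1]
      have hZ : ((k : ℤ)) * (N : ℤ) ^ j < m + 1 := by exact_mod_cast this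
      omega
    · -- upper bound
      have hkey : (N : ℝ) ^ (j + 1) * y.1 < ((k : ℝ) + 1) * (N : ℝ) ^ j := by
        have hh : (N : ℝ) ^ (j + 1) * (((k : ℝ) + 1) / N) = ((k : ℝ) + 1) * (N : ℝ) ^ j := by
          field_simp; ring
        calc (N : ℝ) ^ (j + 1) * y.1 < (N : ℝ) ^ (j + 1) * (((k : ℝ) + 1) / N) :=
            mul_lt_mul_of_pos_left hyA1.2 hNRp
          _ = ((k : ℝ) + 1) * (N : ℝ) ^ j := hh
      have hu0 := hF.1.1
      have : (m : ℝ) < ((k : ℝ) + 1) * (N : ℝ) ^ j := by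
        push_cast at e1 ⊢
        nlinarith [e1]
      exact_mod_cast this
    · rw [norm_mul, norm_pow, norm3_2]; simpa using hyA2
    · dsimp only at e2
      push_cast at e2
      rw [← mul_assoc, ← hNc2]
      linear_combination e2
    · rw [norm_mul, norm_pow, norm2_3]; simpa using hyA3
    · dsimp only at e3
      push_cast at e3
      rw [← mul_assoc, mul_comm ((3:ℚ_[3]) ^ (b * (j + 1))) ((2:ℚ_[3]) ^ (a * (j + 1))), ← hNc3]
      linear_combination e3
  · rintro ⟨hF, q, hq1, hq2, ⟨z, hz, hz2⟩, ⟨w, hw, hw2⟩⟩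
    have h2A : (2 : ℚ_[2]) ^ (a * (j + 1)) ≠ 0 := by
      apply pow_ne_zero; exact two_ne_zero
    have h3B2 : (3 : ℚ_[2]) ^ (b * (j + 1)) ≠ 0 := by
      apply pow_ne_zero
      intro h; have := norm3_2; rw [h] at this; simp at this
    have h3B : (3 : ℚ_[3]) ^ (b * (j + 1)) ≠ 0 := by
      apply pow_ne_zero; exact three_ne_zero
    have h2A3 : (2 : ℚ_[3]) ^ (a * (j + 1)) ≠ 0 := by
      apply pow_ne_zero
      intro h; have := norm2_3; rw [h] at this; simp at this
    refine ⟨((u.1 + q) / (N : ℝ) ^ (j + 1), (u.2.1 + q) / (N : ℚ_[2]) ^ (j + 1),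
      (u.2.2 + q) / (N : ℚ_[3]) ^ (j + 1)), ⟨?_, ?_, ?_⟩, ?_⟩
    · -- real interval
      have hq1R : ((k : ℝ)) * (N : ℝ) ^ j ≤ (q : ℝ) := by exact_mod_cast hq1
      have hq2R : (q : ℝ) + 1 ≤ ((k : ℝ) + 1) * (N : ℝ) ^ j := by
        have : q + 1 ≤ ((k : ℤ) + 1) * (N : ℤ) ^ j := hq2
        exact_mod_cast this
      have hu0 : 0 ≤ u.1 := hF.1.1
      have hu1 : u.1 < 1 := hF.1.2
      constructor
      · rw [div_le_div_iff₀ hNR hNRp]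
        have : (N:ℝ) ^ (j+1) = (N:ℝ)^j * N := by ring
        nlinarith
      · rw [div_lt_div_iff₀ hNRp hNR]
        have : (N:ℝ) ^ (j+1) = (N:ℝ)^j * N := by ring
        nlinarith
    · -- 2-adic norm of y
      have hu2 : u.2.1 + q = 2 ^ (a * (j + 1)) * z := by rw [hz2]; ring
      have : (u.2.1 + q) / (N : ℚ_[2]) ^ (j + 1) = z / 3 ^ (b * (j + 1)) := by
        rw [hu2, hNc2]; exact mul_div_mul_left z _ h2A
      rw [this, norm_div, norm_pow, norm3_2]
      simpa using hz
    · -- 3-adic norm of y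
      have hu3 : u.2.2 + q = 3 ^ (b * (j + 1)) * w := by rw [hw2]; ring
      have : (u.2.2 + q) / (N : ℚ_[3]) ^ (j + 1) = w / 2 ^ (a * (j + 1)) := by
        rw [hu3, hNc3, mul_comm ((2:ℚ_[3]) ^ (a * (j + 1)))]
        exact mul_div_mul_left w _ h3B
      rw [this, norm_div, norm_pow, norm2_3]
      simpa using hw
    · -- rep equation
      have hyx : act ((N : ℚ) ^ (j + 1))
          ((u.1 + q) / (N : ℝ) ^ (j + 1), (u.2.1 + q) / (N : ℚ_[2]) ^ (j + 1),
            (u.2.2 + q) / (N : ℚ_[3]) ^ (j + 1)) = u + Δ (q : ℚ) := by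
        rw [hact]
        have hN2 : ((N : ℚ_[2])) ^ (j + 1) ≠ 0 := by rw [hNc2]; exact mul_ne_zero h2A h3B2
        have hN3 : ((N : ℚ_[3])) ^ (j + 1) ≠ 0 := by rw [hNc3]; exact mul_ne_zero h2A3 h3B
        refine Prod.ext ?_ (Prod.ext ?_ ?_)
        · show (N : ℝ) ^ (j + 1) * ((u.1 + q) / (N : ℝ) ^ (j + 1)) = u.1 + ((q : ℚ) : ℝ)
          rw [mul_div_cancel₀ _ (ne_of_gt hNRp)]; push_cast; ring
        · show (N : ℚ_[2]) ^ (j + 1) * ((u.2.1 + q) / (N : ℚ_[2]) ^ (j + 1))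
            = u.2.1 + ((q : ℚ) : ℚ_[2])
          rw [mul_div_cancel₀ _ hN2]; push_cast; ring
        · show (N : ℚ_[3]) ^ (j + 1) * ((u.2.2 + q) / (N : ℚ_[3]) ^ (j + 1))
            = u.2.2 + ((q : ℚ) : ℚ_[3])
          rw [mul_div_cancel₀ _ hN3]; push_cast; ring
      dsimp only
      rw [hyx]
      apply rep_eq rep hrep _ u hF
      have : u + Δ (q : ℚ) - u = Δ (q : ℚ) := by abel
      rw [this]
      exact ⟨(q : ℚ), zInv6_intCast q, rfl⟩

lemma digit_sum_lt (N : ℕ) (hN : 1 ≤ N) (I : ℕ → ℕ) (hI : ∀ l, I l < N) (j : ℕ) :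
    ∑ l ∈ Finset.range j, I l * N ^ l < N ^ j := by
  induction j with
  | zero => simp
  | succ j ih =>
    rw [Finset.sum_range_succ, pow_succ]
    have h1 := hI j
    have h2 : 0 < N ^ j := Nat.pow_pos hN
    nlinarith

lemma digits_rigid (N : ℕ) (hN : 1 ≤ N) (n : ℕ) (I : ℕ → ℕ) (hI : ∀ l, I l < N)
    (q : ℕ → ℤ)
    (hb : ∀ j < n, (I j : ℤ) * (N : ℤ) ^ j ≤ q j ∧ q j < ((I j : ℤ) + 1) * (N : ℤ) ^ j)
    (hc : ∀ j j', j ≤ j' → j' < n → ((N : ℤ)) ^ (j + 1) ∣ q j' - q j) :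
    ∀ j < n, q j = ∑ l ∈ Finset.range (j + 1), (I l : ℤ) * (N : ℤ) ^ l := by
  intro j
  induction j with
  | zero =>
    intro hj
    have h := hb 0 hj
    simp only [pow_zero, mul_one] at h ⊢
    rw [Finset.sum_range_one]
    simp only [pow_zero, mul_one]
    omega
  | succ j ih =>
    intro hj
    have hqj := ih (by omega)
    obtain ⟨t, ht⟩ := hc j (j + 1) (by omega) hj
    have hb' := hb (j + 1) hj
    have hSlt : ∑ l ∈ Finset.range (j + 1), (I l : ℤ) * (N : ℤ) ^ l < (N : ℤ) ^ (j + 1) := by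
      have := digit_sum_lt N hN I hI (j + 1)
      have hcast : ((∑ l ∈ Finset.range (j + 1), I l * N ^ l : ℕ) : ℤ) < ((N ^ (j + 1) : ℕ) : ℤ) := by
        exact_mod_cast this
      push_cast at hcast
      convert hcast using 2
    have hS0 : (0 : ℤ) ≤ ∑ l ∈ Finset.range (j + 1), (I l : ℤ) * (N : ℤ) ^ l := by
      apply Finset.sum_nonneg
      intro l _
      positivity
    have hP : (0 : ℤ) < (N : ℤ) ^ (j + 1) := by positivity
    rw [hqj] at ht
    have h1 : t ≤ (I (j + 1) : ℤ) := by nlinarith [hb'.2, ht]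
    have h2 : (I (j + 1) : ℤ) ≤ t := by nlinarith [hb'.1, ht]
    have ht' : t = (I (j + 1) : ℤ) := le_antisymm h1 h2
    rw [Finset.sum_range_succ]
    have : q (j + 1) = (∑ l ∈ Finset.range (j + 1), (I l : ℤ) * (N : ℤ) ^ l) + (N : ℤ) ^ (j + 1) * t := by
      omega
    rw [this, ht']
    ring

lemma norm_two_pow_mul_le (E : ℕ) (z : ℚ_[2]) (hz : ‖z‖ ≤ 1) :
    ‖(2 : ℚ_[2]) ^ E * z‖ ≤ ((2 : ℕ) : ℝ) ^ (-(E : ℤ)) := by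
  rw [norm_mul, norm_pow, norm_two2]
  have he : ((2 : ℝ))⁻¹ ^ E = ((2 : ℕ) : ℝ) ^ (-(E : ℤ)) := by
    rw [zpow_neg, ← zpow_natCast, ← inv_zpow]; norm_num
  calc (2 : ℝ)⁻¹ ^ E * ‖z‖ ≤ (2 : ℝ)⁻¹ ^ E * 1 :=
        mul_le_mul_of_nonneg_left hz (by positivity)
    _ = ((2 : ℕ) : ℝ) ^ (-(E : ℤ)) := by rw [mul_one, he]

lemma norm_three_pow_mul_le (E : ℕ) (z : ℚ_[3]) (hz : ‖z‖ ≤ 1) :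
    ‖(3 : ℚ_[3]) ^ E * z‖ ≤ ((3 : ℕ) : ℝ) ^ (-(E : ℤ)) := by
  rw [norm_mul, norm_pow, norm_three3]
  have he : ((3 : ℝ))⁻¹ ^ E = ((3 : ℕ) : ℝ) ^ (-(E : ℤ)) := by
    rw [zpow_neg, ← zpow_natCast, ← inv_zpow]; norm_num
  calc (3 : ℝ)⁻¹ ^ E * ‖z‖ ≤ (3 : ℝ)⁻¹ ^ E * 1 :=
        mul_le_mul_of_nonneg_left hz (by positivity)
    _ = ((3 : ℕ) : ℝ) ^ (-(E : ℤ)) := by rw [mul_one, he]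

lemma two_pow_mul_le_one (E : ℕ) (z : ℚ_[2]) (hz : ‖z‖ ≤ 1) : ‖(2 : ℚ_[2]) ^ E * z‖ ≤ 1 := by
  rw [norm_mul, norm_pow, norm_two2]
  apply mul_le_one₀ (pow_le_one₀ (by norm_num) (by norm_num)) (norm_nonneg _) hz

lemma three_pow_mul_le_one (E : ℕ) (z : ℚ_[3]) (hz : ‖z‖ ≤ 1) : ‖(3 : ℚ_[3]) ^ E * z‖ ≤ 1 := by
  rw [norm_mul, norm_pow, norm_three3]
  apply mul_le_one₀ (pow_le_one₀ (by norm_num) (by norm_num)) (norm_nonneg _) hz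

lemma dvd_of_two_pow (A A' : ℕ) (hAA : A ≤ A') (d : ℤ) (z z' : ℚ_[2])
    (hz : ‖z‖ ≤ 1) (hz' : ‖z'‖ ≤ 1)
    (he : (d : ℚ_[2]) = 2 ^ A' * z' - 2 ^ A * z) : (2 : ℤ) ^ A ∣ d := by
  suffices hs : ‖(d : ℚ_[2])‖ ≤ ((2 : ℕ) : ℝ) ^ (-(A : ℤ)) by
    have := (Padic.norm_int_le_pow_iff_dvd d A).mp hs
    exact_mod_cast this
  rw [he]
  apply le_trans (padic_sub_max 2 _ _)
  apply max_le
  · apply le_trans (norm_two_pow_mul_le A' z' hz')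
    apply zpow_le_zpow_right₀ (by norm_num) (by omega)
  · exact norm_two_pow_mul_le A z hz

lemma dvd_of_three_pow (A A' : ℕ) (hAA : A ≤ A') (d : ℤ) (z z' : ℚ_[3])
    (hz : ‖z‖ ≤ 1) (hz' : ‖z'‖ ≤ 1)
    (he : (d : ℚ_[3]) = 3 ^ A' * z' - 3 ^ A * z) : (3 : ℤ) ^ A ∣ d := by
  suffices hs : ‖(d : ℚ_[3])‖ ≤ ((3 : ℕ) : ℝ) ^ (-(A : ℤ)) by
    have := (Padic.norm_int_le_pow_iff_dvd d A).mp hs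
    exact_mod_cast this
  rw [he]
  apply le_trans (padic_sub_max 3 _ _)
  apply max_le
  · apply le_trans (norm_three_pow_mul_le A' z' hz')
    apply zpow_le_zpow_right₀ (by norm_num) (by omega)
  · exact norm_three_pow_mul_le A z hz

/-- A forward atom `⋂_{j=1}^n α^j(A_{i_j})` is a single coset rectangle
`[0,1) × (2^{an}ℤ₂ - C) × (3^{bn}ℤ₃ - C)` with `C = Σ_{j=1}^n i_j N^{j-1}`;
here `i (j : Fin n)` denotes the index `i_{j+1}`. -/
theorem forward_atom (rep : G → G) (hrep : ∀ x : G, rep x ∈ F ∧ x - rep x ∈ Γ)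
    (a b : ℕ) (ha : 1 ≤ a) (hb : 1 ≤ b) (N : ℕ) (hN : N = 2 ^ a * 3 ^ b)
    (n : ℕ) (hn : 1 ≤ n) (i : Fin n → ℕ) (hi : ∀ j, i j < N) :
    (⋂ j : Fin n, (fun y => rep (act ((N : ℚ) ^ ((j : ℕ) + 1)) y)) '' A N (i j)) =
      {u : G | u.1 ∈ Set.Ico (0 : ℝ) 1 ∧
        (∃ z : ℚ_[2], ‖z‖ ≤ 1 ∧
          u.2.1 = 2 ^ (a * n) * z - ((∑ j : Fin n, i j * N ^ (j : ℕ) : ℕ) : ℚ_[2])) ∧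
        (∃ w : ℚ_[3], ‖w‖ ≤ 1 ∧
          u.2.2 = 3 ^ (b * n) * w - ((∑ j : Fin n, i j * N ^ (j : ℕ) : ℕ) : ℚ_[3]))} := by
  have hNpos : 0 < N := by rw [hN]; positivity
  set I : ℕ → ℕ := fun l => if h : l < n then i ⟨l, h⟩ else 0 with hIdef
  have hIlt : ∀ l, I l < N := by
    intro l
    by_cases h : l < n
    · simp only [hIdef, dif_pos h]; exact hi _
    · simp only [hIdef, dif_neg h]; exact hNpos
  set C : ℕ := ∑ l ∈ Finset.range n, I l * N ^ l with hCdef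
  have hCsum : (∑ j : Fin n, i j * N ^ (j : ℕ)) = C := by
    rw [hCdef, ← Fin.sum_univ_eq_sum_range (fun l => I l * N ^ l) n]
    apply Finset.sum_congr rfl
    intro j _
    simp only [hIdef, dif_pos j.isLt]
  have hNc2 : ∀ e : ℕ, ((N : ℚ_[2])) ^ e = 2 ^ (a * e) * 3 ^ (b * e) := by
    intro e; rw [hN]; push_cast; rw [mul_pow, ← pow_mul, ← pow_mul]
  have hNc3 : ∀ e : ℕ, ((N : ℚ_[3])) ^ e = 2 ^ (a * e) * 3 ^ (b * e) := by
    intro e; rw [hN]; push_cast; rw [mul_pow, ← pow_mul, ← pow_mul]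
  have hNint : ∀ e : ℕ, ((N : ℤ)) ^ e = 2 ^ (a * e) * 3 ^ (b * e) := by
    intro e; rw [hN]; push_cast; rw [mul_pow, ← pow_mul, ← pow_mul]
  ext u
  simp only [Set.mem_iInter, Set.mem_setOf_eq]
  rw [hCsum]
  constructor
  · intro hu
    have H := fun j : Fin n => (image_char rep hrep a b N hN (j : ℕ) (i j) u).mp (hu j)
    choose hF hq using H
    choose q hq1 hq2 hzw using hq
    choose hz hw using hzw
    choose z hz1 hz2 using hz
    choose w hw1 hw2 using hw
    set Q : ℕ → ℤ := fun l => if h : l < n then q ⟨l, h⟩ else 0 with hQdef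
    have hQb : ∀ l, l < n → (I l : ℤ) * (N : ℤ) ^ l ≤ Q l ∧ Q l < ((I l : ℤ) + 1) * (N : ℤ) ^ l := by
      intro l hl
      simp only [hQdef, hIdef, dif_pos hl]
      exact ⟨hq1 ⟨l, hl⟩, hq2 ⟨l, hl⟩⟩
    have hQc : ∀ l l', l ≤ l' → l' < n → ((N : ℤ)) ^ (l + 1) ∣ Q l' - Q l := by
      intro l l' hll' hl'
      have hl : l < n := by omega
      set j : Fin n := ⟨l, hl⟩
      set j' : Fin n := ⟨l', hl'⟩
      have hQl : Q l = q j := by simp only [hQdef, dif_pos hl]; rfl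
      have hQl' : Q l' = q j' := by simp only [hQdef, dif_pos hl']; rfl
      rw [hQl, hQl', hNint (l + 1)]
      have h2 : (2 : ℤ) ^ (a * (l + 1)) ∣ q j' - q j := by
        apply dvd_of_two_pow (a * (l + 1)) (a * (l' + 1))
          (Nat.mul_le_mul_left a (by omega)) _ (z j) (z j') (hz1 j) (hz1 j')
        push_cast
        have e1 := hz2 j
        have e2 := hz2 j'
        linear_combination e2 - e1
      have h3 : (3 : ℤ) ^ (b * (l + 1)) ∣ q j' - q j := by
        apply dvd_of_three_pow (b * (l + 1)) (b * (l' + 1))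
          (Nat.mul_le_mul_left b (by omega)) _ (w j) (w j') (hw1 j) (hw1 j')
        push_cast
        have e1 := hw2 j
        have e2 := hw2 j'
        linear_combination e2 - e1
      exact (cop23 _ _).mul_dvd h2 h3
    have hQ := digits_rigid N (by omega) n I hIlt Q hQb hQc
    have hn1 : n - 1 < n := by omega
    have hsucc : n - 1 + 1 = n := by omega
    set j0 : Fin n := ⟨n - 1, hn1⟩
    have hQn : q j0 = (C : ℤ) := by
      have h1 := hQ (n - 1) hn1
      have h2 : Q (n - 1) = q j0 := by simp only [hQdef, dif_pos hn1]; rfl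
      rw [h2, hsucc] at h1
      rw [h1, hCdef]
      push_cast
      rfl
    refine ⟨(hF j0).1, ⟨z j0, hz1 j0, ?_⟩, ⟨w j0, hw1 j0, ?_⟩⟩
    · have e := hz2 j0
      have : (j0 : ℕ) + 1 = n := hsucc
      rw [this] at e
      rw [e, hQn]
      push_cast
      ring
    · have e := hw2 j0
      have : (j0 : ℕ) + 1 = n := hsucc
      rw [this] at e
      rw [e, hQn]
      push_cast
      ring
  · rintro ⟨hu1, ⟨z, hz, hz2⟩, ⟨w, hw, hw2⟩⟩ j
    apply (image_char rep hrep a b N hN (j : ℕ) (i j) u).mpr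
    have huF : u ∈ F := by
      refine ⟨hu1, ?_, ?_⟩
      · rw [hz2]
        apply le_trans (padic_sub_max 2 _ _)
        exact max_le (two_pow_mul_le_one _ _ hz) (norm_nat_le_one 2 C)
      · rw [hw2]
        apply le_trans (padic_sub_max 3 _ _)
        exact max_le (three_pow_mul_le_one _ _ hw) (norm_nat_le_one 3 C)
    set l : ℕ := (j : ℕ) with hldef
    have hln : l < n := j.isLt
    set S : ℕ := ∑ t ∈ Finset.range (l + 1), I t * N ^ t with hSdef
    have hIl : I l = i j := by simp only [hIdef, hldef, dif_pos hln]; exact dif_pos hln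
    have hS : S = (∑ t ∈ Finset.range l, I t * N ^ t) + i j * N ^ l := by
      rw [hSdef, Finset.sum_range_succ, hIl]
    have hSlt : ∑ t ∈ Finset.range l, I t * N ^ t < N ^ l := digit_sum_lt N (by omega) I hIlt l
    -- split C
    obtain ⟨D, hD⟩ : N ^ (l + 1) ∣ ∑ t ∈ Finset.Ico (l + 1) n, I t * N ^ t := by
      apply Finset.dvd_sum
      intro t ht
      have : l + 1 ≤ t := (Finset.mem_Ico.mp ht).1
      exact Dvd.dvd.mul_left (pow_dvd_pow N this) _
    have hCS : C = S + N ^ (l + 1) * D := by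
      rw [hCdef, hSdef, ← Finset.sum_range_add_sum_Ico _ (by omega : l + 1 ≤ n), hD]
    refine ⟨huF, (S : ℤ), ?_, ?_, ?_, ?_⟩
    · have : (i j : ℤ) * (N : ℤ) ^ l ≤ (S : ℤ) := by
        rw [hS]; push_cast; nlinarith [Finset.sum_nonneg (fun t (_ : t ∈ Finset.range l) => Nat.zero_le (I t * N ^ t))]
      exact_mod_cast this
    · have : (S : ℤ) < ((i j : ℤ) + 1) * (N : ℤ) ^ l := by
        have hSlt' : ((∑ t ∈ Finset.range l, I t * N ^ t : ℕ) : ℤ) < ((N : ℤ)) ^ l := by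
          exact_mod_cast hSlt
        rw [hS]
        push_cast
        nlinarith [hSlt']
      exact_mod_cast this
    · refine ⟨2 ^ (a * (n - (l + 1))) * z - 3 ^ (b * (l + 1)) * (D : ℚ_[2]), ?_, ?_⟩
      · apply le_trans (padic_sub_max 2 _ _)
        apply max_le (two_pow_mul_le_one _ _ hz)
        rw [norm_mul, norm_pow, norm3_2, one_pow, one_mul]
        exact norm_nat_le_one 2 D
      · have hpow : (2 : ℚ_[2]) ^ (a * (l + 1)) * 2 ^ (a * (n - (l + 1))) = 2 ^ (a * n) := by
          rw [← pow_add, ← Nat.mul_add]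
          congr 2
          omega
        have hCe : (C : ℚ_[2]) = (S : ℚ_[2]) + (2 : ℚ_[2]) ^ (a * (l + 1)) * 3 ^ (b * (l + 1)) * (D : ℚ_[2]) := by
          rw [hCS]
          push_cast
          rw [← hNc2 (l + 1)]
        rw [hz2, hCe]
        push_cast
        linear_combination (-z) * hpow
    · refine ⟨3 ^ (b * (n - (l + 1))) * w - 2 ^ (a * (l + 1)) * (D : ℚ_[3]), ?_, ?_⟩
      · apply le_trans (padic_sub_max 3 _ _)
        apply max_le (three_pow_mul_le_one _ _ hw)
        rw [norm_mul, norm_pow, norm2_3, one_pow, one_mul]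
        exact norm_nat_le_one 3 D
      · have hpow : (3 : ℚ_[3]) ^ (b * (l + 1)) * 3 ^ (b * (n - (l + 1))) = 3 ^ (b * n) := by
          rw [← pow_add, ← Nat.mul_add]
          congr 2
          omega
        have hCe : (C : ℚ_[3]) = (S : ℚ_[3]) + (2 : ℚ_[3]) ^ (a * (l + 1)) * 3 ^ (b * (l + 1)) * (D : ℚ_[3]) := by
          rw [hCS]
          push_cast
          rw [← hNc3 (l + 1)]
        rw [hw2, hCe]
        push_cast
        linear_combination (-w) * hpow
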